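/- arXiv:1908.05495 — 3 statements merged into one kernel-verified Lean document; each statement's English description precedes it below -/
import Mathlib

section
/- Let u₁, u₂ be two ensembles of J vectors in ℝ^M, each contained in the ball B_R(u*), and let 𝒢 : ℝ^M → ℝ^L be Lipschitz with constant C_𝒢. Then the empirical cross-covariances satisfy ‖C^{up}(u₁) − C^{up}(u₂)‖₂ ≤ 2(J+1)(m C_𝒢 + M) · (1/J) Σ_j ‖u₁^(j) − u₂^(j)‖₂, where m = R + ‖u*‖₂ and M = C_𝒢 R + ‖𝒢(u*)‖₂. -/
open scoped Matrix.Norms.L2Operator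

lemma outer_l2_opNorm_le {M L : ℕ} (a : EuclideanSpace ℝ (Fin M))
    (b : EuclideanSpace ℝ (Fin L)) :
    ‖(Matrix.of fun i k => a i * b k : Matrix (Fin M) (Fin L) ℝ)‖ ≤ ‖a‖ * ‖b‖ := by
  rw [Matrix.l2_opNorm_def]
  apply ContinuousLinearMap.opNorm_le_bound _ (mul_nonneg (norm_nonneg a) (norm_nonneg b))
  intro x
  have hx : (LinearMap.toContinuousLinearMap
      (Matrix.toEuclideanLin (Matrix.of fun i k => a i * b k : Matrix (Fin M) (Fin L) ℝ))) x
      = (∑ k, b k * x k) • a := by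
    ext i
    simp [Matrix.toEuclideanLin_apply, Matrix.mulVec, dotProduct, Finset.sum_mul,
      Finset.mul_sum, PiLp.smul_apply, smul_eq_mul]
    exact Finset.sum_congr rfl fun k _ => by ring
  rw [LinearEquiv.trans_apply, hx]
  rw [norm_smul, Real.norm_eq_abs]
  have h1 : |∑ k, b k * x k| ≤ ‖b‖ * ‖x‖ := by
    have := abs_real_inner_le_norm b x
    simpa [PiLp.inner_apply, RCLike.inner_apply, conj_trivial, mul_comm] using this
  calc |∑ k, b k * x k| * ‖a‖ ≤ (‖b‖ * ‖x‖) * ‖a‖ := by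
        exact mul_le_mul_of_nonneg_right h1 (norm_nonneg a)
    _ = ‖a‖ * ‖b‖ * ‖x‖ := by ring

lemma mean_norm_le {E : Type*} [NormedAddCommGroup E] [NormedSpace ℝ E] {J : ℕ}
    (hJ : 0 < J) (v : Fin J → E) {c : ℝ} (hv : ∀ j, ‖v j‖ ≤ c) :
    ‖(J : ℝ)⁻¹ • ∑ j, v j‖ ≤ c := by
  have hJ0 : (0:ℝ) < J := by exact_mod_cast hJ
  have h2 : ∑ j, ‖v j‖ ≤ (J:ℝ) * c := by
    simpa using Finset.sum_le_sum fun j (_ : j ∈ Finset.univ) => hv j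
  calc ‖(J : ℝ)⁻¹ • ∑ j, v j‖ = (J:ℝ)⁻¹ * ‖∑ j, v j‖ := by
        rw [norm_smul, Real.norm_eq_abs, abs_of_pos (by positivity)]
    _ ≤ (J:ℝ)⁻¹ * ((J:ℝ) * c) := by
        gcongr
        exact (norm_sum_le _ _).trans h2
    _ = c := by field_simp

lemma mean_norm_le' {E : Type*} [NormedAddCommGroup E] [NormedSpace ℝ E] {J : ℕ}
    (v : Fin J → E) :
    ‖(J : ℝ)⁻¹ • ∑ j, v j‖ ≤ (J:ℝ)⁻¹ * ∑ j, ‖v j‖ := by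
  rw [norm_smul, Real.norm_eq_abs, abs_of_nonneg (by positivity)]
  gcongr
  exact norm_sum_le _ _

theorem cross_covariance_lipschitz {J M L : ℕ} (hJ : 0 < J)
    (u₁ u₂ : Fin J → EuclideanSpace ℝ (Fin M))
    (G : EuclideanSpace ℝ (Fin M) → EuclideanSpace ℝ (Fin L))
    (ustar : EuclideanSpace ℝ (Fin M)) (R CG : ℝ)
    (hR₁ : ∀ j, ‖u₁ j - ustar‖ ≤ R) (hR₂ : ∀ j, ‖u₂ j - ustar‖ ≤ R)
    (hG : ∀ x y, ‖G x - G y‖ ≤ CG * ‖x - y‖) :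
    let Cup : (Fin J → EuclideanSpace ℝ (Fin M)) → Matrix (Fin M) (Fin L) ℝ :=
      fun u => Matrix.of fun i k => (J : ℝ)⁻¹ *
        ∑ j, (u j i - ((J : ℝ)⁻¹ • ∑ j', u j') i) *
          (G (u j) k - ((J : ℝ)⁻¹ • ∑ j', G (u j')) k)
    ‖Cup u₁ - Cup u₂‖ ≤
      2 * ((J : ℝ) + 1) * ((R + ‖ustar‖) * CG + (CG * R + ‖G ustar‖)) *
        ((J : ℝ)⁻¹ * ∑ j, ‖u₁ j - u₂ j‖) := by
  intro Cup
  rcases Nat.eq_zero_or_pos M with hM | hM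
  · subst hM
    have hu : u₁ = u₂ := funext fun j => Subsingleton.elim _ _
    simp [hu, Cup]
  -- main case
  have hJ0 : (0:ℝ) < J := by exact_mod_cast hJ
  have hCG : 0 ≤ CG := by
    have h := hG ((EuclideanSpace.single (⟨0, hM⟩ : Fin M) (1:ℝ))) 0
    have h1 : ‖(EuclideanSpace.single (⟨0, hM⟩ : Fin M) (1:ℝ)) - 0‖ = 1 := by
      simp [EuclideanSpace.norm_single]
    rw [h1, mul_one] at h
    exact le_trans (norm_nonneg _) h
  have hR : 0 ≤ R := le_trans (norm_nonneg _) (hR₁ ⟨0, hJ⟩)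
  set mb : ℝ := R + ‖ustar‖ with hmb_def
  set Mb : ℝ := CG * R + ‖G ustar‖ with hMb_def
  have hmb : 0 ≤ mb := by positivity
  have hMb : 0 ≤ Mb := by positivity
  set m1 := (J : ℝ)⁻¹ • ∑ j', u₁ j' with hm1_def
  set m2 := (J : ℝ)⁻¹ • ∑ j', u₂ j' with hm2_def
  set g1 := (J : ℝ)⁻¹ • ∑ j', G (u₁ j') with hg1_def
  set g2 := (J : ℝ)⁻¹ • ∑ j', G (u₂ j') with hg2_def
  set D : ℝ := (J : ℝ)⁻¹ * ∑ j, ‖u₁ j - u₂ j‖ with hD_def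
  have hD : 0 ≤ D := by positivity
  -- pointwise norm bounds
  have hu1 : ∀ j, ‖u₁ j‖ ≤ mb := fun j => by
    calc ‖u₁ j‖ = ‖(u₁ j - ustar) + ustar‖ := by rw [sub_add_cancel]
      _ ≤ ‖u₁ j - ustar‖ + ‖ustar‖ := norm_add_le _ _
      _ ≤ mb := by rw [hmb_def]; gcongr; exact hR₁ j
  have hu2 : ∀ j, ‖u₂ j‖ ≤ mb := fun j => by
    calc ‖u₂ j‖ = ‖(u₂ j - ustar) + ustar‖ := by rw [sub_add_cancel]
      _ ≤ ‖u₂ j - ustar‖ + ‖ustar‖ := norm_add_le _ _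
      _ ≤ mb := by rw [hmb_def]; gcongr; exact hR₂ j
  have hGu1 : ∀ j, ‖G (u₁ j)‖ ≤ Mb := fun j => by
    calc ‖G (u₁ j)‖ = ‖(G (u₁ j) - G ustar) + G ustar‖ := by rw [sub_add_cancel]
      _ ≤ ‖G (u₁ j) - G ustar‖ + ‖G ustar‖ := norm_add_le _ _
      _ ≤ CG * R + ‖G ustar‖ := by
          gcongr
          exact (hG _ _).trans (mul_le_mul_of_nonneg_left (hR₁ j) hCG)
  have hGu2 : ∀ j, ‖G (u₂ j)‖ ≤ Mb := fun j => by
    calc ‖G (u₂ j)‖ = ‖(G (u₂ j) - G ustar) + G ustar‖ := by rw [sub_add_cancel]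
      _ ≤ ‖G (u₂ j) - G ustar‖ + ‖G ustar‖ := norm_add_le _ _
      _ ≤ CG * R + ‖G ustar‖ := by
          gcongr
          exact (hG _ _).trans (mul_le_mul_of_nonneg_left (hR₂ j) hCG)
  -- mean norm bounds
  have hm1 : ‖m1‖ ≤ mb := mean_norm_le hJ _ hu1
  have hm2 : ‖m2‖ ≤ mb := mean_norm_le hJ _ hu2
  have hg1n : ‖g1‖ ≤ Mb := mean_norm_le hJ _ hGu1
  have hg2n : ‖g2‖ ≤ Mb := mean_norm_le hJ _ hGu2
  have hmdiff : ‖m1 - m2‖ ≤ D := by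
    have : m1 - m2 = (J : ℝ)⁻¹ • ∑ j, (u₁ j - u₂ j) := by
      rw [hm1_def, hm2_def, ← smul_sub, Finset.sum_sub_distrib]
    rw [this, hD_def]
    exact mean_norm_le' _
  have hgdiff : ‖g1 - g2‖ ≤ CG * D := by
    have he : g1 - g2 = (J : ℝ)⁻¹ • ∑ j, (G (u₁ j) - G (u₂ j)) := by
      rw [hg1_def, hg2_def, ← smul_sub, Finset.sum_sub_distrib]
    rw [he]
    calc ‖(J : ℝ)⁻¹ • ∑ j, (G (u₁ j) - G (u₂ j))‖
        ≤ (J:ℝ)⁻¹ * ∑ j, ‖G (u₁ j) - G (u₂ j)‖ := mean_norm_le' _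
      _ ≤ (J:ℝ)⁻¹ * ∑ j, CG * ‖u₁ j - u₂ j‖ := by
          gcongr with j
          exact hG _ _
      _ = CG * D := by rw [← Finset.mul_sum, hD_def]; ring
  -- decomposition
  set P : Fin J → Matrix (Fin M) (Fin L) ℝ := fun j =>
    Matrix.of fun i k => (u₁ j - m1 - (u₂ j - m2)) i * (G (u₁ j) - g1) k with hP_def
  set Q : Fin J → Matrix (Fin M) (Fin L) ℝ := fun j =>
    Matrix.of fun i k => (u₂ j - m2) i * (G (u₁ j) - g1 - (G (u₂ j) - g2)) k with hQ_def
  have key : Cup u₁ - Cup u₂ = (J : ℝ)⁻¹ • ∑ j, (P j + Q j) := by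
    ext i k
    simp only [Cup, hP_def, hQ_def, Matrix.sub_apply, Matrix.smul_apply, Matrix.sum_apply,
      Matrix.of_apply, Matrix.add_apply, smul_eq_mul, PiLp.sub_apply]
    rw [← mul_sub, ← Finset.sum_sub_distrib]
    congr 1
    exact Finset.sum_congr rfl fun j _ => by ring
  set c : ℝ := 2 * Mb + 2 * mb * CG with hc_def
  have hterm : ∀ j ∈ Finset.univ, ‖P j + Q j‖ ≤ c * (‖u₁ j - u₂ j‖ + D) := by
    intro j _
    have ha : ‖u₁ j - m1 - (u₂ j - m2)‖ ≤ ‖u₁ j - u₂ j‖ + D := by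
      calc ‖u₁ j - m1 - (u₂ j - m2)‖ = ‖(u₁ j - u₂ j) - (m1 - m2)‖ := by
            rw [sub_sub_sub_comm]
        _ ≤ ‖u₁ j - u₂ j‖ + ‖m1 - m2‖ := norm_sub_le _ _
        _ ≤ ‖u₁ j - u₂ j‖ + D := by gcongr
    have hb1 : ‖G (u₁ j) - g1‖ ≤ 2 * Mb := by
      calc ‖G (u₁ j) - g1‖ ≤ ‖G (u₁ j)‖ + ‖g1‖ := norm_sub_le _ _
        _ ≤ Mb + Mb := add_le_add (hGu1 j) hg1n
        _ = 2 * Mb := by ring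
    have ha2 : ‖u₂ j - m2‖ ≤ 2 * mb := by
      calc ‖u₂ j - m2‖ ≤ ‖u₂ j‖ + ‖m2‖ := norm_sub_le _ _
        _ ≤ mb + mb := add_le_add (hu2 j) hm2
        _ = 2 * mb := by ring
    have hb : ‖G (u₁ j) - g1 - (G (u₂ j) - g2)‖ ≤ CG * ‖u₁ j - u₂ j‖ + CG * D := by
      calc ‖G (u₁ j) - g1 - (G (u₂ j) - g2)‖
          = ‖(G (u₁ j) - G (u₂ j)) - (g1 - g2)‖ := by rw [sub_sub_sub_comm]
        _ ≤ ‖G (u₁ j) - G (u₂ j)‖ + ‖g1 - g2‖ := norm_sub_le _ _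
        _ ≤ CG * ‖u₁ j - u₂ j‖ + CG * D := add_le_add (hG _ _) hgdiff
    calc ‖P j + Q j‖ ≤ ‖P j‖ + ‖Q j‖ := norm_add_le _ _
      _ ≤ ‖u₁ j - m1 - (u₂ j - m2)‖ * ‖G (u₁ j) - g1‖
          + ‖u₂ j - m2‖ * ‖G (u₁ j) - g1 - (G (u₂ j) - g2)‖ :=
            add_le_add (outer_l2_opNorm_le _ _) (outer_l2_opNorm_le _ _)
      _ ≤ (‖u₁ j - u₂ j‖ + D) * (2 * Mb)
          + (2 * mb) * (CG * ‖u₁ j - u₂ j‖ + CG * D) :=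
            add_le_add
              (mul_le_mul ha hb1 (norm_nonneg _) (by positivity))
              (mul_le_mul ha2 hb (norm_nonneg _) (by positivity))
      _ = c * (‖u₁ j - u₂ j‖ + D) := by rw [hc_def]; ring
  have hsum : ∑ j, c * (‖u₁ j - u₂ j‖ + D) = c * ((J:ℝ) * D) + (J:ℝ) * (c * D) := by
    rw [← Finset.mul_sum, Finset.sum_add_distrib, Finset.sum_const, Finset.card_fin,
      nsmul_eq_mul]
    have hS : ∑ j, ‖u₁ j - u₂ j‖ = (J:ℝ) * D := by
      rw [hD_def]; field_simp
    rw [hS]; ring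
  have main : ‖Cup u₁ - Cup u₂‖ ≤ 2 * c * D := by
    calc ‖Cup u₁ - Cup u₂‖ = ‖(J : ℝ)⁻¹ • ∑ j, (P j + Q j)‖ := by rw [key]
      _ ≤ (J:ℝ)⁻¹ * ∑ j, ‖P j + Q j‖ := mean_norm_le' _
      _ ≤ (J:ℝ)⁻¹ * ∑ j, c * (‖u₁ j - u₂ j‖ + D) := by
          gcongr
          exact hterm _ (Finset.mem_univ _)
      _ = (J:ℝ)⁻¹ * (c * ((J:ℝ) * D) + (J:ℝ) * (c * D)) := by rw [hsum]
      _ = 2 * c * D := by field_simp; ring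
  have hX : 0 ≤ mb * CG + Mb := by positivity
  have hJ1 : (1:ℝ) ≤ (J:ℝ) := by exact_mod_cast hJ
  calc ‖Cup u₁ - Cup u₂‖ ≤ 2 * c * D := main
    _ ≤ 2 * ((J : ℝ) + 1) * (mb * CG + Mb) * D := by
        rw [hc_def]
        nlinarith [mul_nonneg hX hD]
    _ = 2 * ((J : ℝ) + 1) * ((R + ‖ustar‖) * CG + (CG * R + ‖G ustar‖)) * D := by
        rw [hmb_def, hMb_def]
end

section
/- Let u₁, u₂ be two ensembles of J vectors in ℝ^M, each contained in B_R(u*), and let 𝒢 : ℝ^M → ℝ^L be Lipschitz with constant C_𝒢. Then ‖C^{pp}(u₁) − C^{pp}(u₂)‖₂ ≤ 4(J+1) M C_𝒢 · (1/J) Σ_j ‖u₁^(j) − u₂^(j)‖₂, where M = C_𝒢 R + ‖𝒢(u*)‖₂. -/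
open scoped Matrix.Norms.L2Operator

noncomputable def covOuter {L : ℕ} (x y : EuclideanSpace ℝ (Fin L)) :
    Matrix (Fin L) (Fin L) ℝ := Matrix.of fun i k => x i * y k

lemma norm_covOuter_le {L : ℕ} (x y : EuclideanSpace ℝ (Fin L)) :
    ‖covOuter x y‖ ≤ ‖x‖ * ‖y‖ := by
  rw [Matrix.l2_opNorm_def]
  refine ContinuousLinearMap.opNorm_le_bound _
    (mul_nonneg (norm_nonneg _) (norm_nonneg _)) ?_
  intro z
  have hfun : (LinearEquiv.trans Matrix.toEuclideanLin
      LinearMap.toContinuousLinearMap (covOuter x y)) z = (inner ℝ y z : ℝ) • x := by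
    apply (WithLp.equiv 2 (Fin L → ℝ)).injective
    funext i
    simp only [LinearEquiv.trans_apply, LinearMap.coe_toContinuousLinearMap',
      Matrix.toEuclideanLin_apply]
    simp only [Matrix.mulVec, dotProduct, covOuter, Matrix.of_apply,
      Pi.smul_apply, smul_eq_mul, PiLp.inner_apply, RCLike.inner_apply, conj_trivial,
      Equiv.apply_symm_apply, WithLp.equiv_apply, WithLp.equiv_symm_apply, PiLp.smul_apply, WithLp.ofLp_toLp]
    rw [Finset.sum_mul]
    exact Finset.sum_congr rfl fun k _ => by ring
  rw [hfun, norm_smul]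
  have h := abs_real_inner_le_norm y z
  calc |(inner ℝ y z : ℝ)| * ‖x‖ ≤ (‖y‖ * ‖z‖) * ‖x‖ := by
        apply mul_le_mul_of_nonneg_right _ (norm_nonneg x)
        simpa using h
    _ = ‖x‖ * ‖y‖ * ‖z‖ := by ring

theorem covariance_pp_lipschitz {J M L : ℕ} (hJ : 0 < J)
    (u₁ u₂ : Fin J → EuclideanSpace ℝ (Fin M))
    (G : EuclideanSpace ℝ (Fin M) → EuclideanSpace ℝ (Fin L))
    (ustar : EuclideanSpace ℝ (Fin M)) (R CG : ℝ)
    (hR₁ : ∀ j, ‖u₁ j - ustar‖ ≤ R) (hR₂ : ∀ j, ‖u₂ j - ustar‖ ≤ R)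
    (hG : ∀ x y, ‖G x - G y‖ ≤ CG * ‖x - y‖) :
    let Cpp : (Fin J → EuclideanSpace ℝ (Fin M)) → Matrix (Fin L) (Fin L) ℝ :=
      fun u => Matrix.of fun i k => (J : ℝ)⁻¹ *
        ∑ j, (G (u j) i - ((J : ℝ)⁻¹ • ∑ j', G (u j')) i) *
          (G (u j) k - ((J : ℝ)⁻¹ • ∑ j', G (u j')) k)
    ‖Cpp u₁ - Cpp u₂‖ ≤
      4 * ((J : ℝ) + 1) * (CG * R + ‖G ustar‖) * CG *
        ((J : ℝ)⁻¹ * ∑ j, ‖u₁ j - u₂ j‖) := by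
  intro Cpp
  rcases Nat.eq_zero_or_pos M with hM | hM
  · -- trivial case: the state space is a point, so u₁ = u₂
    subst hM
    have hu : u₁ = u₂ := funext fun j => Subsingleton.elim _ _
    subst hu
    have hz : ∀ j : Fin J, ‖u₁ j - u₁ j‖ = (0:ℝ) := fun j => by simp
    simp [sub_self, Finset.sum_congr rfl fun j _ => hz j]
  -- main case
  have hJ' : (0:ℝ) < (J:ℝ) := by exact_mod_cast hJ
  have hJinv : (0:ℝ) ≤ (J:ℝ)⁻¹ := le_of_lt (inv_pos.mpr hJ')
  have hCG : 0 ≤ CG := by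
    have hy : ‖(0 : EuclideanSpace ℝ (Fin M)) -
        EuclideanSpace.single ⟨0, hM⟩ (1:ℝ)‖ = 1 := by
      rw [zero_sub, norm_neg, EuclideanSpace.norm_single, norm_one]
    have := hG 0 (EuclideanSpace.single ⟨0, hM⟩ (1:ℝ))
    rw [hy, mul_one] at this
    exact le_trans (norm_nonneg _) this
  have hR : 0 ≤ R := le_trans (norm_nonneg _) (hR₁ ⟨0, hJ⟩)
  set K : ℝ := CG * R + ‖G ustar‖ with hK
  have hK0 : 0 ≤ K := add_nonneg (mul_nonneg hCG hR) (norm_nonneg _)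
  have hGb : ∀ x : EuclideanSpace ℝ (Fin M), ‖x - ustar‖ ≤ R → ‖G x‖ ≤ K := by
    intro x hx
    calc ‖G x‖ = ‖(G x - G ustar) + G ustar‖ := by rw [sub_add_cancel]
      _ ≤ ‖G x - G ustar‖ + ‖G ustar‖ := norm_add_le _ _
      _ ≤ CG * ‖x - ustar‖ + ‖G ustar‖ := by linarith [hG x ustar]
      _ ≤ CG * R + ‖G ustar‖ := by nlinarith [mul_le_mul_of_nonneg_left hx hCG]
  set m₁ : EuclideanSpace ℝ (Fin L) := (J:ℝ)⁻¹ • ∑ j', G (u₁ j') with hm₁def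
  set m₂ : EuclideanSpace ℝ (Fin L) := (J:ℝ)⁻¹ • ∑ j', G (u₂ j') with hm₂def
  set a : Fin J → EuclideanSpace ℝ (Fin L) := fun j => G (u₁ j) - m₁ with hadef
  set b : Fin J → EuclideanSpace ℝ (Fin L) := fun j => G (u₂ j) - m₂ with hbdef
  set D : Fin J → ℝ := fun j => ‖u₁ j - u₂ j‖ with hDdef
  set T : ℝ := (J:ℝ)⁻¹ * ∑ j, D j with hTdef
  have hT0 : 0 ≤ T := mul_nonneg hJinv (Finset.sum_nonneg fun j _ => norm_nonneg _)
  have hmean_bound : ∀ (v : Fin J → EuclideanSpace ℝ (Fin L)) (c : ℝ),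
      (∀ j, ‖v j‖ ≤ c) → ‖(J:ℝ)⁻¹ • ∑ j', v j'‖ ≤ c := by
    intro v c hv
    rw [norm_smul, Real.norm_eq_abs, abs_of_nonneg hJinv]
    calc (J:ℝ)⁻¹ * ‖∑ j', v j'‖ ≤ (J:ℝ)⁻¹ * ∑ j', ‖v j'‖ := by
          exact mul_le_mul_of_nonneg_left (norm_sum_le _ _) hJinv
      _ ≤ (J:ℝ)⁻¹ * ((J:ℝ) * c) := by
          apply mul_le_mul_of_nonneg_left _ hJinv
          calc (∑ j', ‖v j'‖) ≤ ∑ _j' : Fin J, c := Finset.sum_le_sum fun j _ => hv j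
            _ = (J:ℝ) * c := by simp [mul_comm]
      _ = c := by field_simp
  have hm₁ : ‖m₁‖ ≤ K := hmean_bound _ _ fun j => hGb _ (hR₁ j)
  have hm₂ : ‖m₂‖ ≤ K := hmean_bound _ _ fun j => hGb _ (hR₂ j)
  have ha : ∀ j, ‖a j‖ ≤ 2 * K := by
    intro j
    calc ‖a j‖ ≤ ‖G (u₁ j)‖ + ‖m₁‖ := norm_sub_le _ _
      _ ≤ K + K := add_le_add (hGb _ (hR₁ j)) hm₁
      _ = 2 * K := by ring
  have hb : ∀ j, ‖b j‖ ≤ 2 * K := by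
    intro j
    calc ‖b j‖ ≤ ‖G (u₂ j)‖ + ‖m₂‖ := norm_sub_le _ _
      _ ≤ K + K := add_le_add (hGb _ (hR₂ j)) hm₂
      _ = 2 * K := by ring
  have hmm : ‖m₁ - m₂‖ ≤ CG * T := by
    have : m₁ - m₂ = (J:ℝ)⁻¹ • ∑ j', (G (u₁ j') - G (u₂ j')) := by
      rw [hm₁def, hm₂def, ← smul_sub, Finset.sum_sub_distrib]
    rw [this, norm_smul, Real.norm_eq_abs, abs_of_nonneg hJinv, hTdef, ← mul_assoc,
      mul_comm CG ((J:ℝ)⁻¹), mul_assoc]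
    apply mul_le_mul_of_nonneg_left _ hJinv
    calc ‖∑ j', (G (u₁ j') - G (u₂ j'))‖ ≤ ∑ j', ‖G (u₁ j') - G (u₂ j')‖ := norm_sum_le _ _
      _ ≤ ∑ j', CG * D j' := Finset.sum_le_sum fun j _ => hG _ _
      _ = CG * ∑ j', D j' := by rw [Finset.mul_sum]
  have hab : ∀ j, ‖a j - b j‖ ≤ CG * D j + CG * T := by
    intro j
    have : a j - b j = (G (u₁ j) - G (u₂ j)) - (m₁ - m₂) := by
      rw [hadef, hbdef]; exact sub_sub_sub_comm _ _ _ _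
    rw [this]
    calc ‖(G (u₁ j) - G (u₂ j)) - (m₁ - m₂)‖
        ≤ ‖G (u₁ j) - G (u₂ j)‖ + ‖m₁ - m₂‖ := norm_sub_le _ _
      _ ≤ CG * D j + CG * T := add_le_add (hG _ _) hmm
  have key : Cpp u₁ - Cpp u₂ =
      (J:ℝ)⁻¹ • ∑ j, (covOuter (a j) (a j) - covOuter (b j) (b j)) := by
    ext i k
    simp only [Cpp, Matrix.sub_apply, Matrix.smul_apply, Matrix.sum_apply, Matrix.of_apply,
      covOuter, smul_eq_mul, hadef, hbdef, PiLp.sub_apply]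
    rw [← mul_sub, Finset.sum_sub_distrib]
  have hterm : ∀ j : Fin J, ‖covOuter (a j) (a j) - covOuter (b j) (b j)‖ ≤
      4 * K * (CG * D j + CG * T) := by
    intro j
    have hsplit : covOuter (a j) (a j) - covOuter (b j) (b j) =
        covOuter (a j) (a j - b j) + covOuter (a j - b j) (b j) := by
      ext i k
      simp only [covOuter, Matrix.sub_apply, Matrix.add_apply, Matrix.of_apply, PiLp.sub_apply]
      ring
    rw [hsplit]
    have habj0 : 0 ≤ ‖a j - b j‖ := norm_nonneg _
    calc ‖covOuter (a j) (a j - b j) + covOuter (a j - b j) (b j)‖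
        ≤ ‖covOuter (a j) (a j - b j)‖ + ‖covOuter (a j - b j) (b j)‖ := norm_add_le _ _
      _ ≤ ‖a j‖ * ‖a j - b j‖ + ‖a j - b j‖ * ‖b j‖ :=
          add_le_add (norm_covOuter_le _ _) (norm_covOuter_le _ _)
      _ ≤ (2*K) * ‖a j - b j‖ + ‖a j - b j‖ * (2*K) := by
          have h1 := mul_le_mul_of_nonneg_right (ha j) habj0
          have h2 := mul_le_mul_of_nonneg_left (hb j) habj0
          linarith
      _ = 4 * K * ‖a j - b j‖ := by ring
      _ ≤ 4 * K * (CG * D j + CG * T) := by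
          apply mul_le_mul_of_nonneg_left (hab j)
          positivity
  have hS : ∑ j, D j = (J:ℝ) * T := by
    rw [hTdef]; field_simp
  have hsum : ∑ j, (4 * K * (CG * D j + CG * T)) = 8 * K * CG * ((J:ℝ) * T) := by
    calc ∑ j, (4 * K * (CG * D j + CG * T))
        = ∑ j, ((4 * K * CG) * D j + 4 * K * CG * T) :=
          Finset.sum_congr rfl fun j _ => by ring
      _ = (4 * K * CG) * ∑ j, D j + (J:ℝ) * (4 * K * CG * T) := by
          rw [Finset.sum_add_distrib, ← Finset.mul_sum, Finset.sum_const, Finset.card_univ,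
            Fintype.card_fin, nsmul_eq_mul]
      _ = 8 * K * CG * ((J:ℝ) * T) := by rw [hS]; ring
  calc ‖Cpp u₁ - Cpp u₂‖
      = ‖(J:ℝ)⁻¹ • ∑ j, (covOuter (a j) (a j) - covOuter (b j) (b j))‖ := by rw [key]
    _ ≤ (J:ℝ)⁻¹ * ∑ j, ‖covOuter (a j) (a j) - covOuter (b j) (b j)‖ := by
        rw [norm_smul, Real.norm_eq_abs, abs_of_nonneg hJinv]
        exact mul_le_mul_of_nonneg_left (norm_sum_le _ _) hJinv
    _ ≤ (J:ℝ)⁻¹ * ∑ j, (4 * K * (CG * D j + CG * T)) := by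
        exact mul_le_mul_of_nonneg_left (Finset.sum_le_sum fun j _ => hterm j) hJinv
    _ = (J:ℝ)⁻¹ * (8 * K * CG * ((J:ℝ) * T)) := by rw [hsum]
    _ = 8 * K * CG * T := by field_simp
    _ ≤ 4 * ((J:ℝ) + 1) * K * CG * T := by
        have h8 : (8:ℝ) ≤ 4 * ((J:ℝ) + 1) := by
          have : (1:ℝ) ≤ (J:ℝ) := by exact_mod_cast hJ
          linarith
        have hKCT : 0 ≤ K * CG * T := by positivity
        nlinarith
end

section
/- Let ε, h > 0, s ≥ 0, C_ℰ > 0 and suppose ℰ₁, …, ℰ_N ∈ ℝ^L are i.i.d. random vectors with ‖ℰ_i‖₂ ≤ C_ℰ(ε + h^{s+1}) almost surely, N ≥ 2. Let Σ be the unbiased sample covariance and Σ* = 𝔼[Σ]. For α ∈ (0,1) and η > 0, if N ≥ 2304 C_ℰ⁴ (L²/η²) log(2L²/α) (ε⁴ + h^{4(s+1)}), then P(‖Σ − Σ*‖₂ ≤ η) ≥ 1 − α. -/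
open MeasureTheory ProbabilityTheory Real Finset
open scoped Matrix.Norms.L2Operator ENNReal

set_option maxHeartbeats 2000000



section Aux
variable {Ω : Type*} [MeasurableSpace Ω] {P : Measure Ω} [IsProbabilityMeasure P]

lemma aux_integrable_of_bounded {Z : Ω → ℝ} (hm : AEStronglyMeasurable Z P) {c : ℝ}
    (hb : ∀ᵐ ω ∂P, |Z ω| ≤ c) : Integrable Z P :=
  (integrable_const c).mono' hm (by simpa [Real.norm_eq_abs] using hb)

lemma aux_exp_integrable {Z : Ω → ℝ} (hm : AEStronglyMeasurable Z P) {c : ℝ} (θ : ℝ)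
    (hb : ∀ᵐ ω ∂P, |Z ω| ≤ c) : Integrable (fun ω => Real.exp (θ * Z ω)) P := by
  refine (integrable_const (Real.exp (|θ| * c))).mono'
    (Real.continuous_exp.comp_aestronglyMeasurable (hm.const_mul θ)) ?_
  filter_upwards [hb] with ω hω
  rw [Real.norm_eq_abs, abs_of_pos (Real.exp_pos _), Real.exp_le_exp]
  calc θ * Z ω ≤ |θ * Z ω| := le_abs_self _
    _ = |θ| * |Z ω| := abs_mul _ _
    _ ≤ |θ| * c := by gcongr

lemma aux_mgf_le {Z : Ω → ℝ} (hm : AEStronglyMeasurable Z P) {c : ℝ} (hc : 0 < c) (θ : ℝ)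
    (hb : ∀ᵐ ω ∂P, |Z ω| ≤ c) (hmean : ∫ ω, Z ω ∂P = 0) :
    ∫ ω, Real.exp (θ * Z ω) ∂P ≤ Real.exp (θ ^ 2 * c ^ 2 / 2) := by
  have hZint : Integrable Z P := aux_integrable_of_bounded hm hb
  set a : ℝ := Real.exp (-(θ * c)) / (2 * c) with ha
  set b : ℝ := Real.exp (θ * c) / (2 * c) with hbdef
  have hptwise : ∀ᵐ ω ∂P, Real.exp (θ * Z ω) ≤ a * (c - Z ω) + b * (c + Z ω) := by
    filter_upwards [hb] with ω hω
    have habs := abs_le.1 hω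
    have h1 : (0:ℝ) ≤ (c - Z ω) / (2 * c) := by apply div_nonneg <;> nlinarith
    have h2 : (0:ℝ) ≤ (c + Z ω) / (2 * c) := by apply div_nonneg <;> nlinarith
    have hsum : (c - Z ω) / (2 * c) + (c + Z ω) / (2 * c) = 1 := by
      field_simp; ring
    have hcvx := convexOn_exp.2 (Set.mem_univ (-(θ * c))) (Set.mem_univ (θ * c)) h1 h2 hsum
    simp only [smul_eq_mul] at hcvx
    have harg : (c - Z ω) / (2 * c) * (-(θ * c)) + (c + Z ω) / (2 * c) * (θ * c) = θ * Z ω := by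
      rw [div_mul_eq_mul_div, div_mul_eq_mul_div, ← add_div,
        div_eq_iff (by positivity : (2:ℝ) * c ≠ 0)]
      ring
    rw [harg] at hcvx
    refine hcvx.trans_eq ?_
    rw [ha, hbdef]; ring
  have hint1 : Integrable (fun ω => Real.exp (θ * Z ω)) P := aux_exp_integrable hm θ hb
  have hcz : Integrable (fun ω => c - Z ω) P := (integrable_const c).sub hZint
  have hcz' : Integrable (fun ω => c + Z ω) P := (integrable_const c).add hZint
  have hint2 : Integrable (fun ω => a * (c - Z ω) + b * (c + Z ω)) P :=
    (hcz.const_mul a).add (hcz'.const_mul b)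
  have e1 : ∫ ω, (c - Z ω) ∂P = c := by
    rw [integral_sub (integrable_const c) hZint, hmean]; simp [measure_univ]
  have e2 : ∫ ω, (c + Z ω) ∂P = c := by
    rw [integral_add (integrable_const c) hZint, hmean]; simp [measure_univ]
  calc ∫ ω, Real.exp (θ * Z ω) ∂P ≤ ∫ ω, (a * (c - Z ω) + b * (c + Z ω)) ∂P :=
        integral_mono_ae hint1 hint2 hptwise
    _ = a * c + b * c := by
        rw [integral_add (hcz.const_mul a) (hcz'.const_mul b), integral_const_mul,
          integral_const_mul, e1, e2]
    _ = Real.cosh (θ * c) := by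
        rw [Real.cosh_eq, ha, hbdef]
        field_simp; ring
    _ ≤ Real.exp ((θ * c) ^ 2 / 2) := Real.cosh_le_exp_half_sq _
    _ = Real.exp (θ ^ 2 * c ^ 2 / 2) := by rw [mul_pow]

end Aux



lemma aux_perm_sum {n : ℕ} (a b : Fin n) (hab : a ≠ b) (F : Fin n → Fin n → ℝ) :
    ((n:ℝ) * ((n:ℝ) - 1)) * ∑ σ : Equiv.Perm (Fin n), F (σ a) (σ b)
      = (Nat.factorial n : ℝ) * ∑ p ∈ (Finset.univ : Finset (Fin n)).offDiag, F p.1 p.2 := by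
  classical
  set Fib : Fin n × Fin n → Finset (Equiv.Perm (Fin n)) :=
    fun p => univ.filter (fun σ => (σ a, σ b) = p) with hFib
  have hmaps : ∀ σ : Equiv.Perm (Fin n), σ ∈ (univ : Finset (Equiv.Perm (Fin n))) →
      (σ a, σ b) ∈ (univ : Finset (Fin n)).offDiag := by
    intro σ _
    exact mem_offDiag.2 ⟨mem_univ _, mem_univ _, fun hc => hab (σ.injective hc)⟩
  have hcard : ∀ p ∈ (univ : Finset (Fin n)).offDiag, ∀ q ∈ (univ : Finset (Fin n)).offDiag,
      (Fib p).card = (Fib q).card := by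
    intro p hp q hq
    obtain ⟨-, -, hp12⟩ := mem_offDiag.1 hp
    obtain ⟨-, -, hq12⟩ := mem_offDiag.1 hq
    set τ : Equiv.Perm (Fin n) :=
      (Equiv.swap ((Equiv.swap p.1 q.1) p.2) q.2) * (Equiv.swap p.1 q.1) with hτ
    have hτ1 : τ p.1 = q.1 := by
      have h1 : (Equiv.swap p.1 q.1) p.2 ≠ q.1 := by
        intro hcc
        have := congrArg (Equiv.swap p.1 q.1) hcc
        rw [Equiv.swap_apply_self, Equiv.swap_apply_right] at this
        exact hp12 this.symm
      simp only [hτ, Equiv.Perm.mul_apply, Equiv.swap_apply_left]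
      exact Equiv.swap_apply_of_ne_of_ne (Ne.symm h1) hq12
    have hτ2 : τ p.2 = q.2 := by
      simp only [hτ, Equiv.Perm.mul_apply, Equiv.swap_apply_left]
    have hmemto : ∀ σ ∈ Fib p, τ * σ ∈ Fib q := by
      intro σ hσ
      simp only [hFib, mem_filter, mem_univ, true_and] at hσ ⊢
      have h1 : σ a = p.1 := congrArg Prod.fst hσ
      have h2 : σ b = p.2 := congrArg Prod.snd hσ
      have e1 : (τ * σ) a = q.1 := by rw [Equiv.Perm.mul_apply, h1, hτ1]
      have e2 : (τ * σ) b = q.2 := by rw [Equiv.Perm.mul_apply, h2, hτ2]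
      rw [e1, e2]
    have hmemfrom : ∀ σ ∈ Fib q, τ⁻¹ * σ ∈ Fib p := by
      intro σ hσ
      simp only [hFib, mem_filter, mem_univ, true_and] at hσ ⊢
      have h1 : σ a = q.1 := congrArg Prod.fst hσ
      have h2 : σ b = q.2 := congrArg Prod.snd hσ
      have e1 : (τ⁻¹ * σ) a = p.1 := by
        rw [Equiv.Perm.mul_apply, h1, ← hτ1, show τ⁻¹ (τ p.1) = p.1 from Equiv.Perm.inv_eq_iff_eq.mpr rfl]
      have e2 : (τ⁻¹ * σ) b = p.2 := by
        rw [Equiv.Perm.mul_apply, h2, ← hτ2, show τ⁻¹ (τ p.2) = p.2 from Equiv.Perm.inv_eq_iff_eq.mpr rfl]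
      rw [e1, e2]
    refine Finset.card_bij' (fun σ _ => τ * σ) (fun σ _ => τ⁻¹ * σ) hmemto hmemfrom ?_ ?_
    · intro σ _; group
    · intro σ _; group
  set c : ℕ := (Fib (a, b)).card with hcdef
  have habmem : (a, b) ∈ (univ : Finset (Fin n)).offDiag :=
    mem_offDiag.2 ⟨mem_univ _, mem_univ _, hab⟩
  have hcard' : ∀ p ∈ (univ : Finset (Fin n)).offDiag, (Fib p).card = c :=
    fun p hp => hcard p hp (a, b) habmem
  have hsum : ∑ σ : Equiv.Perm (Fin n), F (σ a) (σ b)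
      = (c : ℝ) * ∑ p ∈ (univ : Finset (Fin n)).offDiag, F p.1 p.2 := by
    rw [← Finset.sum_fiberwise_of_maps_to hmaps (fun σ => F (σ a) (σ b)), Finset.mul_sum]
    refine Finset.sum_congr rfl fun p hp => ?_
    have hconst : ∀ σ ∈ Fib p, F (σ a) (σ b) = F p.1 p.2 := by
      intro σ hσ
      simp only [hFib, mem_filter, mem_univ, true_and] at hσ
      cases hσ; rfl
    rw [Finset.sum_congr rfl hconst, Finset.sum_const, hcard' p hp, nsmul_eq_mul]
  have htot : ((univ : Finset (Fin n)).offDiag.card) * c = Nat.factorial n := by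
    have h2 := Finset.sum_fiberwise_of_maps_to hmaps (fun _ => (1:ℕ))
    simp only [Finset.sum_const, smul_eq_mul, mul_one, Finset.card_univ] at h2
    calc ((univ : Finset (Fin n)).offDiag.card) * c = ∑ _p ∈ (univ : Finset (Fin n)).offDiag, c := by
          rw [Finset.sum_const, smul_eq_mul]
      _ = ∑ p ∈ (univ : Finset (Fin n)).offDiag, (Fib p).card :=
          Finset.sum_congr rfl (fun p hp => (hcard' p hp).symm)
      _ = Fintype.card (Equiv.Perm (Fin n)) := h2
      _ = Nat.factorial n := by rw [Fintype.card_perm, Fintype.card_fin]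
  have hodc : (((univ : Finset (Fin n)).offDiag.card : ℝ)) = (n:ℝ) * ((n:ℝ) - 1) := by
    rw [Finset.offDiag_card, Finset.card_univ, Fintype.card_fin]
    have h1 : n ≤ n * n := Nat.le_mul_of_pos_left n (by
      rcases Nat.eq_zero_or_pos n with h | h
      · subst h; exact absurd (Subsingleton.elim a b) hab
      · exact h)
    push_cast [Nat.cast_sub h1]
    ring
  rw [hsum]
  have hR := congrArg (fun x : ℕ => (x : ℝ)) htot
  push_cast at hR
  rw [← mul_assoc, ← hodc, hR]



section Aux
variable {Ω : Type*} [MeasurableSpace Ω] {P : Measure Ω} [IsProbabilityMeasure P] {L : ℕ}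

lemma aux_integrable_of_bounded' {Z : Ω → ℝ} (hm : AEStronglyMeasurable Z P) {c : ℝ}
    (hb : ∀ᵐ ω ∂P, |Z ω| ≤ c) : Integrable Z P :=
  (integrable_const c).mono' hm (by simpa [Real.norm_eq_abs] using hb)

lemma aux_integral_prod (X : ℕ → Ω → EuclideanSpace ℝ (Fin L)) (hXm : ∀ i, Measurable (X i))
    (hX : iIndepFun X P) (u v : ℕ → ℕ)
    (g : ℕ → EuclideanSpace ℝ (Fin L) → EuclideanSpace ℝ (Fin L) → ℝ)
    (hg : ∀ r, Measurable (Function.uncurry (g r)))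
    (C : ℕ → ℝ)
    (hgb : ∀ r, ∀ᵐ ω ∂P, |g r (X (u r) ω) (X (v r) ω)| ≤ C r)
    (k : ℕ)
    (hd : ∀ r r', r < k → r' < k → r ≠ r' →
      u r ≠ u r' ∧ u r ≠ v r' ∧ v r ≠ u r' ∧ v r ≠ v r') :
    ∫ ω, ∏ r ∈ Finset.range k, g r (X (u r) ω) (X (v r) ω) ∂P
      = ∏ r ∈ Finset.range k, ∫ ω, g r (X (u r) ω) (X (v r) ω) ∂P := by
  classical
  induction k with
  | zero => simp
  | succ k ih =>
    have hd' : ∀ r r', r < k → r' < k → r ≠ r' →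
        u r ≠ u r' ∧ u r ≠ v r' ∧ v r ≠ u r' ∧ v r ≠ v r' :=
      fun r r' hr hr' => hd r r' (hr.trans (Nat.lt_succ_self k)) (hr'.trans (Nat.lt_succ_self k))
    have hmf : ∀ r, Measurable (fun ω => g r (X (u r) ω) (X (v r) ω)) :=
      fun r => (hg r).comp ((hXm (u r)).prodMk (hXm (v r)))
    have hballk : ∀ᵐ ω ∂P, ∀ r ∈ Finset.range k, |g r (X (u r) ω) (X (v r) ω)| ≤ C r :=
      (ae_ball_iff (Finset.range k : Finset ℕ).countable_toSet).2 fun r _ => hgb r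
    have hprodbound : ∀ᵐ ω ∂P,
        |∏ r ∈ Finset.range k, g r (X (u r) ω) (X (v r) ω)| ≤ ∏ r ∈ Finset.range k, C r := by
      filter_upwards [hballk] with ω hω
      rw [Finset.abs_prod]
      exact Finset.prod_le_prod (fun r _ => abs_nonneg _) hω
    have hint1 : Integrable (fun ω => ∏ r ∈ Finset.range k, g r (X (u r) ω) (X (v r) ω)) P :=
      aux_integrable_of_bounded'
        (Finset.measurable_prod _ (fun r _ => hmf r)).aestronglyMeasurable hprodbound
    have hint2 : Integrable (fun ω => g k (X (u k) ω) (X (v k) ω)) P :=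
      aux_integrable_of_bounded' (hmf k).aestronglyMeasurable (hgb k)
    set S : Finset ℕ := (Finset.range k).biUnion (fun r => {u r, v r}) with hS
    set T : Finset ℕ := ({u k, v k} : Finset ℕ) with hT
    have hST : Disjoint S T := by
      rw [Finset.disjoint_left]
      intro i hiS hiT
      rw [hS, Finset.mem_biUnion] at hiS
      obtain ⟨r, hr, hir⟩ := hiS
      rw [Finset.mem_range] at hr
      obtain ⟨h1, h2, h3, h4⟩ :=
        hd r k (hr.trans (Nat.lt_succ_self k)) (Nat.lt_succ_self k) hr.ne
      rw [Finset.mem_insert, Finset.mem_singleton] at hir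
      rw [hT, Finset.mem_insert, Finset.mem_singleton] at hiT
      rcases hir with rfl | rfl <;> rcases hiT with hh | hh <;> tauto
    have base := hX.indepFun_finset S T hST hXm
    set ext : ({x // x ∈ S} → EuclideanSpace ℝ (Fin L)) → ℕ → EuclideanSpace ℝ (Fin L) :=
      fun w i => if h : i ∈ S then w ⟨i, h⟩ else 0 with hext
    set extT : ({x // x ∈ T} → EuclideanSpace ℝ (Fin L)) → ℕ → EuclideanSpace ℝ (Fin L) :=
      fun w i => if h : i ∈ T then w ⟨i, h⟩ else 0 with hextT
    have hextm : ∀ i, Measurable (fun w => ext w i) := by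
      intro i; by_cases h : i ∈ S
      · simp only [hext, dif_pos h]; exact measurable_pi_apply _
      · simp only [hext, dif_neg h]; exact measurable_const
    have hextTm : ∀ i, Measurable (fun w => extT w i) := by
      intro i; by_cases h : i ∈ T
      · simp only [hextT, dif_pos h]; exact measurable_pi_apply _
      · simp only [hextT, dif_neg h]; exact measurable_const
    set φ : ({x // x ∈ S} → EuclideanSpace ℝ (Fin L)) → ℝ :=
      fun w => ∏ r ∈ Finset.range k, g r (ext w (u r)) (ext w (v r)) with hφ
    set ψ : ({x // x ∈ T} → EuclideanSpace ℝ (Fin L)) → ℝ :=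
      fun w => g k (extT w (u k)) (extT w (v k)) with hψ
    have hφm : Measurable φ :=
      Finset.measurable_prod _ fun r _ => (hg r).comp ((hextm (u r)).prodMk (hextm (v r)))
    have hψm : Measurable ψ := (hg k).comp ((hextTm (u k)).prodMk (hextTm (v k)))
    have hcomp := base.comp hφm hψm
    have he1 : (φ ∘ fun a (i : {x // x ∈ S}) => X i a)
        = fun ω => ∏ r ∈ Finset.range k, g r (X (u r) ω) (X (v r) ω) := by
      funext ω
      simp only [Function.comp_apply, hφ]
      refine Finset.prod_congr rfl fun r hr => ?_
      have hu : u r ∈ S := Finset.mem_biUnion.2 ⟨r, hr, Finset.mem_insert_self _ _⟩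
      have hv : v r ∈ S :=
        Finset.mem_biUnion.2 ⟨r, hr, Finset.mem_insert_of_mem (Finset.mem_singleton_self _)⟩
      simp only [hext, dif_pos hu, dif_pos hv]
    have he2 : (ψ ∘ fun a (i : {x // x ∈ T}) => X i a)
        = fun ω => g k (X (u k) ω) (X (v k) ω) := by
      funext ω
      have hu : u k ∈ T := Finset.mem_insert_self _ _
      have hv : v k ∈ T := Finset.mem_insert_of_mem (Finset.mem_singleton_self _)
      simp only [Function.comp_apply, hψ, hextT, dif_pos hu, dif_pos hv]
    rw [he1, he2] at hcomp
    simp only [Finset.prod_range_succ]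
    rw [← ih hd']
    exact IndepFun.integral_fun_mul_eq_mul_integral hcomp hint1.aestronglyMeasurable hint2.aestronglyMeasurable
end Aux



section Aux
variable {Ω : Type*} [MeasurableSpace Ω] {P : Measure Ω} [IsProbabilityMeasure P] {L : ℕ}

lemma aux_coord_measurable (j : Fin L) :
    Measurable (fun v : EuclideanSpace ℝ (Fin L) => v j) :=
  (measurable_pi_apply j).comp (WithLp.measurable_ofLp _ _)

lemma aux_coord_le (v : EuclideanSpace ℝ (Fin L)) (j : Fin L) : |v j| ≤ ‖v‖ := by
  rw [EuclideanSpace.norm_eq]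
  have h1 : |v j| = Real.sqrt (|v j| ^ 2) := (Real.sqrt_sq (abs_nonneg _)).symm
  rw [h1]
  apply Real.sqrt_le_sqrt
  calc |v j| ^ 2 = ‖v j‖ ^ 2 := by rw [Real.norm_eq_abs]
    _ ≤ ∑ i, ‖v i‖ ^ 2 :=
        Finset.single_le_sum (f := fun i => ‖v i‖ ^ 2) (fun i _ => by positivity) (mem_univ j)

lemma aux_sum_apply {ι : Type*} (S : Finset ι) (f : ι → EuclideanSpace ℝ (Fin L)) (j : Fin L) :
    (∑ n ∈ S, f n) j = ∑ n ∈ S, f n j := by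
  classical
  induction S using Finset.induction_on with
  | empty => rfl
  | insert _ _ hnotmem ih =>
    rw [Finset.sum_insert hnotmem, Finset.sum_insert hnotmem, ← ih]
    rfl

lemma aux_integral_pair_eq (X : ℕ → Ω → EuclideanSpace ℝ (Fin L)) (hXm : ∀ i, Measurable (X i))
    (hX : iIndepFun X P)
    (hident : ∀ i, P.map (X i) = P.map (X 0))
    (q : EuclideanSpace ℝ (Fin L) → EuclideanSpace ℝ (Fin L) → ℝ)
    (hq : Measurable (Function.uncurry q))
    {i l : ℕ} (hil : i ≠ l) :
    ∫ ω, q (X i ω) (X l ω) ∂P = ∫ ω, q (X 0 ω) (X 1 ω) ∂P := by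
  have key : ∀ {a b : ℕ}, a ≠ b →
      P.map (fun ω => (X a ω, X b ω)) = (P.map (X 0)).prod (P.map (X 0)) := by
    intro a b hab
    have h := (indepFun_iff_map_prod_eq_prod_map_map (hXm a).aemeasurable
      (hXm b).aemeasurable).1 (hX.indepFun hab)
    rw [h, hident a, hident b]
  have h1 : ∫ ω, q (X i ω) (X l ω) ∂P
      = ∫ p, Function.uncurry q p ∂((P.map (X 0)).prod (P.map (X 0))) := by
    rw [← key hil, integral_map ((hXm i).prodMk (hXm l)).aemeasurable
      hq.stronglyMeasurable.aestronglyMeasurable]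
    rfl
  have h2 : ∫ ω, q (X 0 ω) (X 1 ω) ∂P
      = ∫ p, Function.uncurry q p ∂((P.map (X 0)).prod (P.map (X 0))) := by
    rw [← key (Nat.zero_ne_one), integral_map ((hXm 0).prodMk (hXm 1)).aemeasurable
      hq.stronglyMeasurable.aestronglyMeasurable]
    rfl
  rw [h1, h2]

lemma aux_offdiag_reindex {N : ℕ} (f : ℕ → ℕ → ℝ) :
    ∑ p ∈ (Finset.univ : Finset (Fin N)).offDiag, f p.1 p.2
      = ∑ p ∈ (Finset.range N).offDiag, f p.1 p.2 := by
  classical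
  refine Finset.sum_bij (fun (p : Fin N × Fin N) _ => ((p.1 : ℕ), (p.2 : ℕ))) ?_ ?_ ?_ ?_
  · intro p hp
    obtain ⟨-, -, hne⟩ := Finset.mem_offDiag.1 hp
    exact Finset.mem_offDiag.2 ⟨Finset.mem_range.2 p.1.isLt, Finset.mem_range.2 p.2.isLt,
      fun hc => hne (Fin.ext hc)⟩
  · intro p hp q hq hpq
    obtain ⟨h1, h2⟩ := Prod.ext_iff.1 hpq
    exact Prod.ext (Fin.ext h1) (Fin.ext h2)
  · intro p hp
    obtain ⟨h1, h2, hne⟩ := Finset.mem_offDiag.1 hp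
    refine ⟨(⟨p.1, Finset.mem_range.1 h1⟩, ⟨p.2, Finset.mem_range.1 h2⟩), ?_, ?_⟩
    · exact Finset.mem_offDiag.2 ⟨Finset.mem_univ _, Finset.mem_univ _,
        fun hc => hne (congrArg Fin.val hc)⟩
    · rfl
  · intro p hp; rfl
end Aux




lemma aux_cov_identity {N : ℕ} (hN : 2 ≤ N) (x y : ℕ → ℝ) :
    ((N:ℝ) - 1)⁻¹ * ∑ i ∈ Finset.range N,
        (x i - (N:ℝ)⁻¹ * ∑ n ∈ Finset.range N, x n) * (y i - (N:ℝ)⁻¹ * ∑ n ∈ Finset.range N, y n)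
      = ((N:ℝ) * ((N:ℝ) - 1))⁻¹ *
          ∑ p ∈ (Finset.range N).offDiag, (x p.1 - x p.2) * (y p.1 - y p.2) / 2 := by
  classical
  have hN0 : (0:ℝ) < (N:ℝ) := by exact_mod_cast Nat.lt_of_lt_of_le Nat.zero_lt_two hN
  have hN1 : (N:ℝ) - 1 ≠ 0 := by
    have : (2:ℝ) ≤ (N:ℝ) := by exact_mod_cast hN
    nlinarith
  set Sx := ∑ n ∈ Finset.range N, x n with hSx
  set Sy := ∑ n ∈ Finset.range N, y n with hSy
  set Sxy := ∑ n ∈ Finset.range N, x n * y n with hSxy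
  have hinner : ∑ i ∈ Finset.range N,
      (x i - (N:ℝ)⁻¹ * Sx) * (y i - (N:ℝ)⁻¹ * Sy)
      = Sxy - (N:ℝ)⁻¹ * Sx * Sy := by
    have expand : ∀ i, (x i - (N:ℝ)⁻¹ * Sx) * (y i - (N:ℝ)⁻¹ * Sy)
        = x i * y i - ((N:ℝ)⁻¹ * Sy) * x i - ((N:ℝ)⁻¹ * Sx) * y i
            + ((N:ℝ)⁻¹ * Sx) * ((N:ℝ)⁻¹ * Sy) := by intro i; ring
    rw [Finset.sum_congr rfl (fun i _ => expand i)]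
    rw [Finset.sum_add_distrib, Finset.sum_sub_distrib, Finset.sum_sub_distrib,
      ← Finset.mul_sum, ← Finset.mul_sum, Finset.sum_const, Finset.card_range, nsmul_eq_mul]
    rw [← hSx, ← hSy]
    field_simp
    ring
  have houter : ∑ p ∈ (Finset.range N).offDiag, (x p.1 - x p.2) * (y p.1 - y p.2) / 2
      = (N:ℝ) * Sxy - Sx * Sy := by
    have hsub : (Finset.range N).offDiag ⊆ Finset.range N ×ˢ Finset.range N := by
      intro p hp
      obtain ⟨h1, h2, _⟩ := Finset.mem_offDiag.1 hp
      exact Finset.mem_product.2 ⟨h1, h2⟩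
    have hzero : ∀ p ∈ Finset.range N ×ˢ Finset.range N, p ∉ (Finset.range N).offDiag →
        (x p.1 - x p.2) * (y p.1 - y p.2) / 2 = 0 := by
      intro p hp hnp
      obtain ⟨h1, h2⟩ := Finset.mem_product.1 hp
      have : p.1 = p.2 := by
        by_contra hne
        exact hnp (Finset.mem_offDiag.2 ⟨h1, h2, hne⟩)
      rw [this]; ring
    rw [Finset.sum_subset hsub hzero, Finset.sum_product]
    have inner : ∀ i, ∑ l ∈ Finset.range N, (x i - x l) * (y i - y l) / 2
        = ((N:ℝ) * (x i * y i) - x i * Sy - Sx * y i + Sxy) / 2 := by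
      intro i
      have e : ∀ l, (x i - x l) * (y i - y l) / 2
          = (x i * y i - x i * y l - x l * y i + x l * y l) / 2 := fun l => by ring
      rw [Finset.sum_congr rfl fun l _ => e l, ← Finset.sum_div]
      congr 1
      rw [Finset.sum_add_distrib, Finset.sum_sub_distrib, Finset.sum_sub_distrib,
        Finset.sum_const, Finset.card_range, nsmul_eq_mul, ← Finset.mul_sum, ← Finset.sum_mul]
    rw [Finset.sum_congr rfl fun i _ => inner i, ← Finset.sum_div]
    rw [Finset.sum_add_distrib, Finset.sum_sub_distrib, Finset.sum_sub_distrib,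
      Finset.sum_const, Finset.card_range, nsmul_eq_mul, ← Finset.mul_sum, ← Finset.mul_sum,
      ← Finset.sum_mul]
    rw [← hSx, ← hSy, ← hSxy]
    field_simp
    ring
  rw [hinner, houter]
  field_simp

lemma aux_clm_apply {L : ℕ} (M : Matrix (Fin L) (Fin L) ℝ) (x : EuclideanSpace ℝ (Fin L))
    (j : Fin L) :
    ((Matrix.toEuclideanLin ≪≫ₗ LinearMap.toContinuousLinearMap) M) x j = ∑ k, M j k * x k := by
  simp only [LinearEquiv.trans_apply, LinearMap.coe_toContinuousLinearMap',
    Matrix.toEuclideanLin_apply, Matrix.mulVec, dotProduct]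

lemma aux_opnorm_le {L : ℕ} (M : Matrix (Fin L) (Fin L) ℝ) {t : ℝ} (ht : 0 ≤ t)
    (hM : ∀ j k, |M j k| ≤ t) : ‖M‖ ≤ (L:ℝ) * t := by
  rw [Matrix.l2_opNorm_def]
  refine ContinuousLinearMap.opNorm_le_bound _ (by positivity) ?_
  intro x
  set w : EuclideanSpace ℝ (Fin L) :=
    ((Matrix.toEuclideanLin ≪≫ₗ LinearMap.toContinuousLinearMap) M) x with hw
  have hwj : ∀ j, w j = ∑ k, M j k * x k := fun j => aux_clm_apply M x j
  have hcoord : ∀ j, |w j| ≤ t * ∑ k, |x k| := by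
    intro j
    rw [hwj j]
    calc |∑ k, M j k * x k| ≤ ∑ k, |M j k * x k| := Finset.abs_sum_le_sum_abs _ _
      _ ≤ ∑ k, t * |x k| := by
          refine Finset.sum_le_sum fun k _ => ?_
          rw [abs_mul]
          exact mul_le_mul_of_nonneg_right (hM j k) (abs_nonneg _)
      _ = t * ∑ k, |x k| := by rw [Finset.mul_sum]
  have hCS : (∑ k, |x k|) ^ 2 ≤ (L:ℝ) * ∑ k, |x k| ^ 2 := by
    have := sq_sum_le_card_mul_sum_sq (s := (Finset.univ : Finset (Fin L)))
      (f := fun k => |x k|)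
    simpa [Finset.card_univ] using this
  have hxnorm : ∑ k, |x k| ^ 2 = ‖x‖ ^ 2 := by
    rw [EuclideanSpace.norm_eq, Real.sq_sqrt (by positivity)]
    simp [Real.norm_eq_abs]
  have hbound : ∑ j, ‖w j‖ ^ 2 ≤ ((L:ℝ) * t * ‖x‖) ^ 2 := by
    have h4 : (∑ k, |x k|) ^ 2 ≤ (L:ℝ) * ‖x‖ ^ 2 := by rw [← hxnorm]; exact hCS
    have h7 : (L:ℝ) * t ^ 2 * (∑ k, |x k|) ^ 2 ≤ (L:ℝ) * t ^ 2 * ((L:ℝ) * ‖x‖ ^ 2) :=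
      mul_le_mul_of_nonneg_left h4 (by positivity)
    calc ∑ j, ‖w j‖ ^ 2 ≤ ∑ _j : Fin L, (t * ∑ k, |x k|) ^ 2 := by
          refine Finset.sum_le_sum fun j _ => ?_
          rw [Real.norm_eq_abs]
          have h1 := hcoord j
          have h2 : (0:ℝ) ≤ |w j| := abs_nonneg _
          nlinarith
      _ = (L:ℝ) * (t * ∑ k, |x k|) ^ 2 := by
          rw [Finset.sum_const, Finset.card_univ, Fintype.card_fin, nsmul_eq_mul]
      _ = (L:ℝ) * t ^ 2 * (∑ k, |x k|) ^ 2 := by ring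
      _ ≤ (L:ℝ) * t ^ 2 * ((L:ℝ) * ‖x‖ ^ 2) := h7
      _ = ((L:ℝ) * t * ‖x‖) ^ 2 := by ring
  calc ‖w‖ = Real.sqrt (∑ j, ‖w j‖ ^ 2) := EuclideanSpace.norm_eq w
    _ ≤ Real.sqrt (((L:ℝ) * t * ‖x‖) ^ 2) := Real.sqrt_le_sqrt hbound
    _ = (L:ℝ) * t * ‖x‖ := Real.sqrt_sq (by positivity)

theorem modelling_error_covariance_sample_complexity {L : ℕ} (hL : 0 < L)
    {Ω : Type*} [MeasurableSpace Ω] (P : Measure Ω) [IsProbabilityMeasure P]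
    (N : ℕ) (hN : 2 ≤ N)
    (E : ℕ → Ω → EuclideanSpace ℝ (Fin L))
    (hmeas : ∀ i, Measurable (E i))
    (hindep : iIndepFun E P)
    (hident : ∀ i, P.map (E i) = P.map (E 0))
    (ε h s CE : ℝ) (hε : 0 < ε) (hh : 0 < h) (hs : 0 ≤ s) (hCE : 0 < CE)
    (hbound : ∀ i, ∀ᵐ ω ∂P, ‖E i ω‖ ≤ CE * (ε + h ^ (s + 1)))
    -- the unbiased sample covariance matrix
    (Scov : Ω → Matrix (Fin L) (Fin L) ℝ)
    (hScov : ∀ ω j k, Scov ω j k = ((N : ℝ) - 1)⁻¹ *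
      ∑ i ∈ Finset.range N,
        (E i ω j - ((N : ℝ)⁻¹ • ∑ n ∈ Finset.range N, E n ω) j) *
        (E i ω k - ((N : ℝ)⁻¹ • ∑ n ∈ Finset.range N, E n ω) k))
    -- its expectation
    (Sstar : Matrix (Fin L) (Fin L) ℝ)
    (hSstar : ∀ j k, Sstar j k = ∫ ω, Scov ω j k ∂P)
    (α η : ℝ) (hα : α ∈ Set.Ioo (0 : ℝ) 1) (hη : 0 < η)
    (hNbig : (N : ℝ) ≥
      2304 * CE ^ 4 * ((L : ℝ) ^ 2 / η ^ 2) * Real.log (2 * L ^ 2 / α) *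
        (ε ^ 4 + h ^ (4 * (s + 1)))) :
    ENNReal.ofReal (1 - α) ≤ P {ω | ‖Scov ω - Sstar‖ ≤ η} := by
  classical
  obtain ⟨hα0, hα1⟩ := hα
  have hL1 : (1:ℝ) ≤ (L:ℝ) := by exact_mod_cast hL
  have hL0 : (0:ℝ) < (L:ℝ) := by linarith
  have hd0 : (0:ℝ) < h ^ (s+1) := Real.rpow_pos_of_pos hh _
  set B : ℝ := CE * (ε + h ^ (s+1)) with hBdef
  have hB0 : (0:ℝ) < B := mul_pos hCE (by linarith)
  set t : ℝ := η / (L:ℝ) with htdef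
  have ht0 : (0:ℝ) < t := div_pos hη hL0
  set m : ℕ := N / 2 with hmdef
  have hm1 : 1 ≤ m := by omega
  have h2m : 2 * m ≤ N := by omega
  have hm0R : (0:ℝ) < (m:ℝ) := by exact_mod_cast hm1
  have hNle4m : (N:ℝ) ≤ 4 * (m:ℝ) := by
    have h1 : N ≤ 2*(N/2)+1 := by omega
    have h3 : (N:ℝ) ≤ 2 * ((N/2:ℕ):ℝ) + 1 := by exact_mod_cast h1
    have h4 : (1:ℝ) ≤ ((N/2:ℕ):ℝ) := by exact_mod_cast hm1
    rw [hmdef]; linarith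
  set c : ℝ := 4 * B^2 with hcdef
  have hc0 : (0:ℝ) < c := by rw [hcdef]; positivity
  set Λ : ℝ := Real.log (2 * (L:ℝ)^2 / α) with hΛdef
  have hratio1 : (1:ℝ) < 2 * (L:ℝ)^2 / α := by
    rw [lt_div_iff₀ hα0]; nlinarith
  have hΛ0 : 0 < Λ := Real.log_pos hratio1
  have hNR : (2:ℝ) ≤ (N:ℝ) := by exact_mod_cast hN
  have hNN : (0:ℝ) < (N:ℝ)*((N:ℝ)-1) := by nlinarith
  have hcard : (((Finset.range N).offDiag.card : ℝ)) = (N:ℝ)*((N:ℝ)-1) := by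
    rw [Finset.offDiag_card, Finset.card_range]
    have h1 : N ≤ N*N := Nat.le_mul_of_pos_left N (by omega)
    push_cast [Nat.cast_sub h1]; ring
  -- numeric bound
  have hkey : Λ * (2*c^2) ≤ t^2 * (m:ℝ) := by
    have hd4 : h ^ (4*(s+1)) = (h ^ (s+1))^4 := by
      rw [show (4:ℝ)*(s+1) = (s+1)*4 by ring, Real.rpow_mul hh.le]
      rw [show ((4:ℝ):ℝ) = ((4:ℕ):ℝ) by norm_num, Real.rpow_natCast]
    have hb4 : B^4 ≤ 8 * CE^4 * (ε^4 + h^(4*(s+1))) := by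
      have hq4 : (ε + h^(s+1))^4 ≤ 8*(ε^4 + (h^(s+1))^4) := by
        nlinarith [sq_nonneg (ε - h^(s+1)), sq_nonneg (ε + h^(s+1)),
          sq_nonneg (ε^2 - (h^(s+1))^2), sq_nonneg (ε*(h^(s+1)))]
      calc B^4 = CE^4 * (ε + h^(s+1))^4 := by rw [hBdef]; ring
        _ ≤ CE^4 * (8*(ε^4 + (h^(s+1))^4)) :=
            mul_le_mul_of_nonneg_left hq4 (by positivity)
        _ = 8 * CE^4 * (ε^4 + h^(4*(s+1))) := by rw [hd4]; ring
    have ht2 : t^2 = η^2/(L:ℝ)^2 := by rw [htdef, div_pow]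
    have hη2 : (0:ℝ) < η^2 := by positivity
    have hNlow : 2304 * CE^4 * ((L:ℝ)^2/η^2) * Λ * (ε^4 + h^(4*(s+1))) ≤ (N:ℝ) := hNbig
    have e1 : t^2 * ((N:ℝ)/4) ≤ t^2 * (m:ℝ) := by
      apply mul_le_mul_of_nonneg_left _ (by positivity)
      linarith
    have e2 : t^2 * ((2304 * CE^4 * ((L:ℝ)^2/η^2) * Λ * (ε^4 + h^(4*(s+1))))/4)
        ≤ t^2 * ((N:ℝ)/4) := by
      apply mul_le_mul_of_nonneg_left _ (by positivity)
      linarith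
    have e3 : t^2 * ((2304 * CE^4 * ((L:ℝ)^2/η^2) * Λ * (ε^4 + h^(4*(s+1))))/4)
        = 576 * CE^4 * Λ * (ε^4 + h^(4*(s+1))) := by
      rw [ht2]; field_simp; ring
    have hstep1 : 576 * CE^4 * Λ * (ε^4 + h^(4*(s+1))) ≤ t^2 * (m:ℝ) := by
      rw [← e3]; exact e2.trans e1
    have hstep2 : Λ * (2*c^2) = 32 * Λ * B^4 := by rw [hcdef]; ring
    have hstep3 : 32 * Λ * B^4 ≤ 256 * CE^4 * Λ * (ε^4 + h^(4*(s+1))) := by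
      nlinarith [hb4, hΛ0.le]
    have hpos : (0:ℝ) ≤ CE^4 * Λ * (ε^4 + h^(4*(s+1))) := by positivity
    nlinarith
  have hballN : ∀ᵐ ω ∂P, ∀ i, ‖E i ω‖ ≤ B := ae_all_iff.2 hbound
  have tri : ∀ x y : ℝ, |x - y| ≤ |x| + |y| := fun x y => by
    rw [sub_eq_add_neg]
    exact (abs_add_le x (-y)).trans_eq (by rw [abs_neg])
  have hfacpos : (0:ℝ) < (Nat.factorial N : ℝ) := by exact_mod_cast Nat.factorial_pos N
  have hfac1 : ∑ _σ : Equiv.Perm (Fin N), ((Nat.factorial N:ℝ))⁻¹ = 1 := by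
    rw [Finset.sum_const, Finset.card_univ, Fintype.card_perm, Fintype.card_fin, nsmul_eq_mul]
    field_simp
  -- ==================== per-entry tail bound ====================
  have main : ∀ (j k : Fin L) (sgn : ℝ), sgn = 1 ∨ sgn = -1 →
      P {ω | t ≤ sgn * (Scov ω j k - Sstar j k)} ≤ ENNReal.ofReal (α / (2 * (L:ℝ)^2)) := by
    intro j k sgn hsgn
    have hsgnabs : |sgn| = 1 := by rcases hsgn with rfl | rfl <;> norm_num
    set q : EuclideanSpace ℝ (Fin L) → EuclideanSpace ℝ (Fin L) → ℝ :=
      fun uu vv => (uu j - vv j) * (uu k - vv k) / 2 with hqdef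
    have hqm : Measurable (Function.uncurry q) := by
      have h1 : Measurable fun p : EuclideanSpace ℝ (Fin L) × EuclideanSpace ℝ (Fin L) => p.1 j :=
        (aux_coord_measurable j).comp measurable_fst
      have h2 : Measurable fun p : EuclideanSpace ℝ (Fin L) × EuclideanSpace ℝ (Fin L) => p.2 j :=
        (aux_coord_measurable j).comp measurable_snd
      have h3 : Measurable fun p : EuclideanSpace ℝ (Fin L) × EuclideanSpace ℝ (Fin L) => p.1 k :=
        (aux_coord_measurable k).comp measurable_fst
      have h4 : Measurable fun p : EuclideanSpace ℝ (Fin L) × EuclideanSpace ℝ (Fin L) => p.2 k :=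
        (aux_coord_measurable k).comp measurable_snd
      exact ((h1.sub h2).mul (h3.sub h4)).div_const 2
    set G : ℕ → ℕ → Ω → ℝ := fun i l ω => q (E i ω) (E l ω) with hGdef
    have hGm : ∀ i l, Measurable (G i l) :=
      fun i l => hqm.comp ((hmeas i).prodMk (hmeas l))
    have hqb : ∀ᵐ ω ∂P, ∀ i l : ℕ, |G i l ω| ≤ 2 * B^2 := by
      filter_upwards [hballN] with ω hω i l
      have h1 : |E i ω j - E l ω j| ≤ 2 * B := by
        calc |E i ω j - E l ω j| ≤ |E i ω j| + |E l ω j| := tri _ _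
          _ ≤ B + B := add_le_add ((aux_coord_le _ j).trans (hω i))
              ((aux_coord_le _ j).trans (hω l))
          _ = 2*B := by ring
      have h2 : |E i ω k - E l ω k| ≤ 2 * B := by
        calc |E i ω k - E l ω k| ≤ |E i ω k| + |E l ω k| := tri _ _
          _ ≤ B + B := add_le_add ((aux_coord_le _ k).trans (hω i))
              ((aux_coord_le _ k).trans (hω l))
          _ = 2*B := by ring
      have : |G i l ω| = |E i ω j - E l ω j| * |E i ω k - E l ω k| / 2 := by
        rw [hGdef]; dsimp only; rw [hqdef]; dsimp only
        rw [abs_div, abs_mul, abs_two]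
      rw [this]
      calc |E i ω j - E l ω j| * |E i ω k - E l ω k| / 2 ≤ (2*B) * (2*B) / 2 := by
            apply div_le_div_of_nonneg_right ?_ ?_ |>.trans_eq rfl
            · exact mul_le_mul h1 h2 (abs_nonneg _) (by linarith)
            · norm_num
        _ = 2*B^2 := by ring
    set κ : ℝ := ∫ ω, G 0 1 ω ∂P with hκdef
    have hGint : ∀ i l : ℕ, Integrable (G i l) P := fun i l =>
      aux_integrable_of_bounded (hGm i l).aestronglyMeasurable
        (by filter_upwards [hqb] with ω hω using hω i l)
    have hκb : |κ| ≤ 2 * B^2 := by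
      rw [hκdef, ← Real.norm_eq_abs]
      calc ‖∫ ω, G 0 1 ω ∂P‖ ≤ ∫ ω, ‖G 0 1 ω‖ ∂P := norm_integral_le_integral_norm _
        _ ≤ ∫ _ω, (2*B^2 : ℝ) ∂P := by
            apply integral_mono_ae (hGint 0 1).norm (integrable_const _)
            filter_upwards [hqb] with ω hω
            simpa [Real.norm_eq_abs] using hω 0 1
        _ = 2*B^2 := by simp [measure_univ]
    have hGmean : ∀ i l : ℕ, i ≠ l → ∫ ω, G i l ω ∂P = κ := fun i l hil =>
      aux_integral_pair_eq E hmeas hindep hident q hqm hil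
    have hZb : ∀ᵐ ω ∂P, ∀ i l : ℕ, |sgn * (G i l ω - κ)| ≤ c := by
      filter_upwards [hqb] with ω hω i l
      rw [abs_mul, hsgnabs, one_mul]
      calc |G i l ω - κ| ≤ |G i l ω| + |κ| := tri _ _
        _ ≤ 2*B^2 + 2*B^2 := add_le_add (hω i l) hκb
        _ = c := by rw [hcdef]; ring
    -- U-statistic representation
    have hUrep : ∀ ω, Scov ω j k
        = ((N:ℝ)*((N:ℝ)-1))⁻¹ * ∑ p ∈ (Finset.range N).offDiag, G p.1 p.2 ω := by
      intro ω
      rw [hScov ω j k]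
      have hcoordsum : ∀ (jj : Fin L), (((N:ℝ)⁻¹ • ∑ n ∈ Finset.range N, E n ω) jj)
          = (N:ℝ)⁻¹ * ∑ n ∈ Finset.range N, E n ω jj := by
        intro jj
        rw [PiLp.smul_apply, aux_sum_apply, smul_eq_mul]
      rw [hcoordsum j, hcoordsum k]
      exact aux_cov_identity hN (fun i => E i ω j) (fun i => E i ω k)
    have hSb : ∀ᵐ ω ∂P, |Scov ω j k| ≤ 2 * B^2 := by
      filter_upwards [hqb] with ω hω
      rw [hUrep ω]
      have habs : |∑ p ∈ (Finset.range N).offDiag, G p.1 p.2 ω|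
          ≤ (((Finset.range N).offDiag.card : ℝ)) * (2*B^2) := by
        calc |∑ p ∈ (Finset.range N).offDiag, G p.1 p.2 ω|
            ≤ ∑ p ∈ (Finset.range N).offDiag, |G p.1 p.2 ω| := Finset.abs_sum_le_sum_abs _ _
          _ ≤ (Finset.range N).offDiag.card • (2*B^2) :=
              Finset.sum_le_card_nsmul _ _ _ (fun p _ => hω p.1 p.2)
          _ = (((Finset.range N).offDiag.card : ℝ)) * (2*B^2) := nsmul_eq_mul _ _
      rw [abs_mul, abs_of_pos (inv_pos.2 hNN)]
      calc ((N:ℝ)*((N:ℝ)-1))⁻¹ * |∑ p ∈ (Finset.range N).offDiag, G p.1 p.2 ω|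
          ≤ ((N:ℝ)*((N:ℝ)-1))⁻¹ * ((((Finset.range N).offDiag.card : ℝ)) * (2*B^2)) :=
            mul_le_mul_of_nonneg_left habs (by positivity)
        _ = 2*B^2 := by rw [hcard, ← mul_assoc, inv_mul_cancel₀ hNN.ne', one_mul]
    have hSm : Measurable (fun ω => Scov ω j k) := by
      have hfe : (fun ω => Scov ω j k)
          = fun ω => ((N:ℝ)*((N:ℝ)-1))⁻¹ * ∑ p ∈ (Finset.range N).offDiag, G p.1 p.2 ω :=
        funext hUrep
      rw [hfe]
      exact (Finset.measurable_sum _ fun p _ => hGm p.1 p.2).const_mul _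
    have hSstarval : Sstar j k = κ := by
      rw [hSstar j k, integral_congr_ae (ae_of_all _ hUrep), integral_const_mul,
        integral_finset_sum _ (fun p _ => hGint p.1 p.2)]
      have : ∀ p ∈ (Finset.range N).offDiag, ∫ ω, G p.1 p.2 ω ∂P = κ := by
        intro p hp
        obtain ⟨-, -, hne⟩ := Finset.mem_offDiag.1 hp
        exact hGmean p.1 p.2 hne
      rw [Finset.sum_congr rfl this, Finset.sum_const, nsmul_eq_mul, hcard, ← mul_assoc,
        inv_mul_cancel₀ hNN.ne', one_mul]
    -- permutation family
    set lam : ℝ := t * (m:ℝ) / c^2 with hlamdef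
    have hlampos : 0 < lam := div_pos (mul_pos ht0 hm0R) (by positivity)
    set θ : ℝ := lam / (m:ℝ) with hθdef
    set σn : Equiv.Perm (Fin N) → ℕ → ℕ :=
      fun σ i => if hi : i < N then (σ ⟨i, hi⟩ : ℕ) else i with hσndef
    have hσinj : ∀ σ, Function.Injective (σn σ) := by
      intro σ x y hxy
      have hv : ∀ z (hz : z < N), σn σ z = ((σ ⟨z, hz⟩ : Fin N) : ℕ) := fun z hz => dif_pos hz
      have hnv : ∀ z, ¬ z < N → σn σ z = z := fun z hz => dif_neg hz
      by_cases hx : x < N <;> by_cases hy : y < N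
      · rw [hv x hx, hv y hy] at hxy
        simpa using congrArg Fin.val (σ.injective (Fin.ext hxy))
      · rw [hv x hx, hnv y hy] at hxy
        have := (σ ⟨x, hx⟩).isLt
        omega
      · rw [hnv x hx, hv y hy] at hxy
        have := (σ ⟨y, hy⟩).isLt
        omega
      · rw [hnv x hx, hnv y hy] at hxy
        exact hxy
    have hσlt : ∀ σ (i : ℕ) (hi : i < N), σn σ i = ((σ ⟨i, hi⟩ : Fin N) : ℕ) :=
      fun σ i hi => dif_pos hi
    set W : Equiv.Perm (Fin N) → Ω → ℝ :=
      fun σ ω => (m:ℝ)⁻¹ * ∑ r ∈ Finset.range m, G (σn σ (2*r)) (σn σ (2*r+1)) ω with hWdef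
    have hWm : ∀ σ, Measurable (W σ) :=
      fun σ => (Finset.measurable_sum _ fun r _ => hGm _ _).const_mul _
    have hWb : ∀ σ, ∀ᵐ ω ∂P, |sgn * (W σ ω - κ)| ≤ c := by
      intro σ
      filter_upwards [hqb] with ω hω
      have hWabs : |W σ ω| ≤ 2*B^2 := by
        rw [hWdef]; dsimp only
        rw [abs_mul, abs_of_pos (inv_pos.2 hm0R)]
        calc (m:ℝ)⁻¹ * |∑ r ∈ Finset.range m, G (σn σ (2*r)) (σn σ (2*r+1)) ω|
            ≤ (m:ℝ)⁻¹ * ((m:ℝ) * (2*B^2)) := by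
              apply mul_le_mul_of_nonneg_left _ (by positivity)
              calc |∑ r ∈ Finset.range m, G (σn σ (2*r)) (σn σ (2*r+1)) ω|
                  ≤ ∑ r ∈ Finset.range m, |G (σn σ (2*r)) (σn σ (2*r+1)) ω| :=
                    Finset.abs_sum_le_sum_abs _ _
                _ ≤ (Finset.range m).card • (2*B^2) :=
                    Finset.sum_le_card_nsmul _ _ _ (fun r _ => hω _ _)
                _ = (m:ℝ) * (2*B^2) := by rw [Finset.card_range, nsmul_eq_mul]
          _ = 2*B^2 := by rw [← mul_assoc, inv_mul_cancel₀ hm0R.ne', one_mul]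
      rw [abs_mul, hsgnabs, one_mul]
      calc |W σ ω - κ| ≤ |W σ ω| + |κ| := tri _ _
        _ ≤ 2*B^2 + 2*B^2 := add_le_add hWabs hκb
        _ = c := by rw [hcdef]; ring
    -- averaging identity
    have havg : ∀ ω, Scov ω j k
        = ((Nat.factorial N : ℝ))⁻¹ * ∑ σ : Equiv.Perm (Fin N), W σ ω := by
      intro ω
      have hper : ∀ r ∈ Finset.range m,
          ∑ σ : Equiv.Perm (Fin N), G (σn σ (2*r)) (σn σ (2*r+1)) ω
          = ((N:ℝ)*((N:ℝ)-1))⁻¹ * ((Nat.factorial N : ℝ)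
              * ∑ p ∈ (Finset.range N).offDiag, G p.1 p.2 ω) := by
        intro r hr
        rw [Finset.mem_range] at hr
        have h2r : 2*r < N := by omega
        have h2r1 : 2*r+1 < N := by omega
        have hab : (⟨2*r, h2r⟩ : Fin N) ≠ ⟨2*r+1, h2r1⟩ := by
          intro hcc
          have := congrArg Fin.val hcc
          simp only at this
          omega
        have hps := aux_perm_sum (⟨2*r, h2r⟩ : Fin N) ⟨2*r+1, h2r1⟩ hab
          (fun i l => G ↑i ↑l ω)
        rw [aux_offdiag_reindex (fun i l => G i l ω)] at hps
        have hrw : ∀ σ : Equiv.Perm (Fin N),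
            G (σn σ (2*r)) (σn σ (2*r+1)) ω = G ↑(σ ⟨2*r, h2r⟩) ↑(σ ⟨2*r+1, h2r1⟩) ω := by
          intro σ
          rw [hσlt σ _ h2r, hσlt σ _ h2r1]
        rw [Finset.sum_congr rfl (fun σ _ => hrw σ)]
        rw [← hps, ← mul_assoc, inv_mul_cancel₀ hNN.ne', one_mul]
      have hswap : ∑ σ : Equiv.Perm (Fin N), W σ ω
          = (m:ℝ)⁻¹ * ∑ r ∈ Finset.range m,
              ∑ σ : Equiv.Perm (Fin N), G (σn σ (2*r)) (σn σ (2*r+1)) ω := by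
        simp only [hWdef]
        rw [← Finset.mul_sum, Finset.sum_comm]
      rw [hUrep ω, hswap, Finset.sum_congr rfl hper, Finset.sum_const, Finset.card_range,
        nsmul_eq_mul]
      field_simp
    -- per-σ mgf bound
    have hmgfσ : ∀ σ : Equiv.Perm (Fin N),
        ∫ ω, Real.exp (lam * (sgn * (W σ ω - κ))) ∂P
          ≤ Real.exp (lam^2 * c^2 / (2*(m:ℝ))) := by
      intro σ
      set u : ℕ → ℕ := fun r => σn σ (2*r) with hudef
      set v : ℕ → ℕ := fun r => σn σ (2*r+1) with hvdef
      have huv : ∀ r, u r ≠ v r := by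
        intro r hcc
        have := hσinj σ hcc
        omega
      have hdecomp : ∀ ω, lam * (sgn * (W σ ω - κ))
          = ∑ r ∈ Finset.range m, θ * (sgn * (G (u r) (v r) ω - κ)) := by
        intro ω
        have e : ∀ r ∈ Finset.range m, θ * (sgn * (G (u r) (v r) ω - κ))
            = θ * sgn * G (u r) (v r) ω - θ * sgn * κ := fun r _ => by ring
        rw [Finset.sum_congr rfl e, Finset.sum_sub_distrib, ← Finset.mul_sum,
          Finset.sum_const, Finset.card_range, nsmul_eq_mul]
        rw [hWdef]; dsimp only
        rw [hθdef]
        field_simp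
        ring
      have hexp : (fun ω => Real.exp (lam * (sgn * (W σ ω - κ))))
          = fun ω => ∏ r ∈ Finset.range m,
              Real.exp (θ * (sgn * (G (u r) (v r) ω - κ))) := by
        funext ω
        rw [hdecomp ω, Real.exp_sum]
      rw [hexp]
      set g : ℕ → EuclideanSpace ℝ (Fin L) → EuclideanSpace ℝ (Fin L) → ℝ :=
        fun _r uu vv => Real.exp (θ * (sgn * (q uu vv - κ))) with hgdef
      have hsame : ∀ r ω, Real.exp (θ * (sgn * (G (u r) (v r) ω - κ)))
          = g r (E (u r) ω) (E (v r) ω) := fun r ω => rfl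
      have hgm : ∀ r, Measurable (Function.uncurry (g r)) := by
        intro r
        exact Real.measurable_exp.comp
          (((hqm.sub measurable_const).const_mul sgn).const_mul θ)
      have hgb : ∀ r, ∀ᵐ ω ∂P, |g r (E (u r) ω) (E (v r) ω)| ≤ Real.exp (|θ| * c) := by
        intro r
        filter_upwards [hZb] with ω hω
        rw [← hsame r ω, abs_of_pos (Real.exp_pos _), Real.exp_le_exp]
        calc θ * (sgn * (G (u r) (v r) ω - κ)) ≤ |θ * (sgn * (G (u r) (v r) ω - κ))| :=
              le_abs_self _
          _ = |θ| * |sgn * (G (u r) (v r) ω - κ)| := abs_mul _ _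
          _ ≤ |θ| * c := mul_le_mul_of_nonneg_left (hω _ _) (abs_nonneg _)
      have hd : ∀ r r', r < m → r' < m → r ≠ r' →
          u r ≠ u r' ∧ u r ≠ v r' ∧ v r ≠ u r' ∧ v r ≠ v r' := by
        intro r r' _ _ hrr
        refine ⟨?_, ?_, ?_, ?_⟩ <;> intro hcc <;> have := hσinj σ hcc <;> omega
      have hprod := aux_integral_prod E hmeas hindep u v g hgm
        (fun _ => Real.exp (|θ| * c)) hgb m hd
      simp only [← hsame] at hprod
      rw [hprod]
      have hterm : ∀ r ∈ Finset.range m,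
          ∫ ω, Real.exp (θ * (sgn * (G (u r) (v r) ω - κ))) ∂P
            ≤ Real.exp (θ^2 * c^2 / 2) := by
        intro r _
        apply aux_mgf_le (Z := fun ω => sgn * (G (u r) (v r) ω - κ))
          (((hGm (u r) (v r)).sub measurable_const).const_mul sgn).aestronglyMeasurable
          hc0 θ
          (by filter_upwards [hZb] with ω hω using hω (u r) (v r))
        rw [integral_const_mul, integral_sub (hGint _ _) (integrable_const κ),
          hGmean (u r) (v r) (huv r), integral_const]
        simp
      calc ∏ r ∈ Finset.range m, ∫ ω, Real.exp (θ * (sgn * (G (u r) (v r) ω - κ))) ∂P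
          ≤ ∏ _r ∈ Finset.range m, Real.exp (θ^2 * c^2 / 2) := by
            apply Finset.prod_le_prod
            · intro r _
              apply integral_nonneg
              intro ω
              exact (Real.exp_pos _).le
            · exact hterm
        _ = Real.exp ((m:ℝ) * (θ^2 * c^2 / 2)) := by
            rw [Finset.prod_const, Finset.card_range, ← Real.exp_nat_mul]
        _ = Real.exp (lam^2 * c^2 / (2*(m:ℝ))) := by
            congr 1
            rw [hθdef]
            field_simp
    -- full mgf bound
    have hVb : ∀ᵐ ω ∂P, |sgn * (Scov ω j k - κ)| ≤ c := by
      filter_upwards [hSb] with ω hω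
      rw [abs_mul, hsgnabs, one_mul]
      calc |Scov ω j k - κ| ≤ |Scov ω j k| + |κ| := tri _ _
        _ ≤ 2*B^2 + 2*B^2 := add_le_add hω hκb
        _ = c := by rw [hcdef]; ring
    have hVm : Measurable (fun ω => sgn * (Scov ω j k - κ)) :=
      (hSm.sub measurable_const).const_mul sgn
    have hexpint : Integrable (fun ω => Real.exp (lam * (sgn * (Scov ω j k - κ)))) P :=
      aux_exp_integrable hVm.aestronglyMeasurable lam hVb
    have hintσ : ∀ σ, Integrable (fun ω => Real.exp (lam * (sgn * (W σ ω - κ)))) P :=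
      fun σ => aux_exp_integrable
        (((hWm σ).sub measurable_const).const_mul sgn).aestronglyMeasurable lam (hWb σ)
    have hmgf : ∫ ω, Real.exp (lam * (sgn * (Scov ω j k - κ))) ∂P
        ≤ Real.exp (lam^2 * c^2 / (2*(m:ℝ))) := by
      have hJ : ∀ ω, Real.exp (lam * (sgn * (Scov ω j k - κ)))
          ≤ ∑ σ : Equiv.Perm (Fin N),
              ((Nat.factorial N : ℝ))⁻¹ * Real.exp (lam * (sgn * (W σ ω - κ))) := by
        intro ω
        have harg : lam * (sgn * (Scov ω j k - κ))
            = ∑ σ : Equiv.Perm (Fin N),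
                ((Nat.factorial N : ℝ))⁻¹ • (lam * (sgn * (W σ ω - κ))) := by
          simp only [smul_eq_mul]
          have e : ∀ σ : Equiv.Perm (Fin N), σ ∈ (Finset.univ : Finset (Equiv.Perm (Fin N))) →
              ((Nat.factorial N : ℝ))⁻¹ * (lam * (sgn * (W σ ω - κ)))
              = (Nat.factorial N : ℝ)⁻¹ * (lam * sgn) * W σ ω
                  - (Nat.factorial N : ℝ)⁻¹ * (lam * sgn) * κ := fun σ _ => by ring
          rw [Finset.sum_congr rfl e, Finset.sum_sub_distrib, ← Finset.mul_sum,
            Finset.sum_const, Finset.card_univ, Fintype.card_perm, Fintype.card_fin,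
            nsmul_eq_mul]
          have hS := havg ω
          have : ∑ σ : Equiv.Perm (Fin N), W σ ω = (Nat.factorial N : ℝ) * Scov ω j k := by
            rw [hS]; field_simp
          rw [this]
          field_simp
        rw [harg]
        have := convexOn_exp.map_sum_le (t := (Finset.univ : Finset (Equiv.Perm (Fin N))))
          (w := fun _ => ((Nat.factorial N : ℝ))⁻¹)
          (p := fun σ => lam * (sgn * (W σ ω - κ)))
          (fun _ _ => by positivity) hfac1 (fun _ _ => Set.mem_univ _)
        simpa [smul_eq_mul] using this
      calc ∫ ω, Real.exp (lam * (sgn * (Scov ω j k - κ))) ∂P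
          ≤ ∫ ω, (∑ σ : Equiv.Perm (Fin N),
              ((Nat.factorial N : ℝ))⁻¹ * Real.exp (lam * (sgn * (W σ ω - κ)))) ∂P := by
            apply integral_mono_ae hexpint
              (integrable_finset_sum _ (fun σ _ => (hintσ σ).const_mul _))
            exact ae_of_all _ hJ
        _ = ∑ σ : Equiv.Perm (Fin N),
              ((Nat.factorial N : ℝ))⁻¹ * ∫ ω, Real.exp (lam * (sgn * (W σ ω - κ))) ∂P := by
            rw [integral_finset_sum _ (fun σ _ => (hintσ σ).const_mul _)]
            exact Finset.sum_congr rfl fun σ _ => integral_const_mul _ _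
        _ ≤ ∑ _σ : Equiv.Perm (Fin N),
              ((Nat.factorial N : ℝ))⁻¹ * Real.exp (lam^2 * c^2 / (2*(m:ℝ))) := by
            apply Finset.sum_le_sum
            intro σ _
            exact mul_le_mul_of_nonneg_left (hmgfσ σ) (by positivity)
        _ = Real.exp (lam^2 * c^2 / (2*(m:ℝ))) := by
            rw [← Finset.sum_mul, hfac1, one_mul]
    -- Chernoff
    have hevent : {ω | t ≤ sgn * (Scov ω j k - Sstar j k)}
        = {ω | t ≤ sgn * (Scov ω j k - κ)} := by
      simp only [hSstarval]
    rw [hevent]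
    have hcher := measure_ge_le_exp_mul_mgf (μ := P)
      (X := fun ω => sgn * (Scov ω j k - κ)) t hlampos.le hexpint
    have hmgfle : mgf (fun ω => sgn * (Scov ω j k - κ)) P lam
        ≤ Real.exp (lam^2 * c^2 / (2*(m:ℝ))) := hmgf
    have hfinal : (P {ω | t ≤ sgn * (Scov ω j k - κ)}).toReal ≤ α / (2 * (L:ℝ)^2) := by
      have hexpo : -lam * t + lam^2 * c^2 / (2*(m:ℝ)) ≤ -Λ := by
        have e : -lam * t + lam^2 * c^2 / (2*(m:ℝ)) = -(t^2*(m:ℝ)/(2*c^2)) := by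
          rw [hlamdef]
          field_simp
          ring
        rw [e, neg_le_neg_iff, le_div_iff₀ (by positivity : (0:ℝ) < 2*c^2)]
        linarith [hkey]
      calc (P {ω | t ≤ sgn * (Scov ω j k - κ)}).toReal
          ≤ Real.exp (-lam * t) * mgf (fun ω => sgn * (Scov ω j k - κ)) P lam := hcher
        _ ≤ Real.exp (-lam * t) * Real.exp (lam^2 * c^2 / (2*(m:ℝ))) :=
            mul_le_mul_of_nonneg_left hmgfle (Real.exp_pos _).le
        _ = Real.exp (-lam * t + lam^2 * c^2 / (2*(m:ℝ))) := (Real.exp_add _ _).symm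
        _ ≤ Real.exp (-Λ) := Real.exp_le_exp.2 hexpo
        _ = α / (2 * (L:ℝ)^2) := by
            rw [hΛdef, Real.exp_neg, Real.exp_log (by positivity), inv_div]
    exact (ENNReal.le_ofReal_iff_toReal_le (measure_ne_top P _) (by positivity)).2 hfinal
  -- ==================== assembly ====================
  set A : Fin L × Fin L × Bool → Set Ω := fun z =>
    {ω | t ≤ (if z.2.2 then (1:ℝ) else -1) * (Scov ω z.1 z.2.1 - Sstar z.1 z.2.1)} with hAdef
  have hAbound : ∀ z, P (A z) ≤ ENNReal.ofReal (α / (2 * (L:ℝ)^2)) := by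
    intro z
    apply main z.1 z.2.1
    cases z.2.2 <;> simp
  set bad : Set Ω := ⋃ z, A z with hbaddef
  have hbadle : P bad ≤ ENNReal.ofReal α := by
    calc P bad ≤ ∑' z, P (A z) := measure_iUnion_le _
      _ = ∑ z : Fin L × Fin L × Bool, P (A z) := tsum_fintype _
      _ ≤ ∑ _z : Fin L × Fin L × Bool, ENNReal.ofReal (α / (2 * (L:ℝ)^2)) :=
          Finset.sum_le_sum fun z _ => hAbound z
      _ = (Fintype.card (Fin L × Fin L × Bool)) * ENNReal.ofReal (α / (2 * (L:ℝ)^2)) := by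
          rw [Finset.sum_const, Finset.card_univ, nsmul_eq_mul]
      _ = ENNReal.ofReal α := by
          rw [Fintype.card_prod, Fintype.card_prod, Fintype.card_fin, Fintype.card_bool]
          rw [← ENNReal.ofReal_natCast, ← ENNReal.ofReal_mul (by positivity)]
          congr 1
          push_cast
          field_simp
  have hsub : Set.univ ⊆ {ω | ‖Scov ω - Sstar‖ ≤ η} ∪ bad := by
    intro ω _
    by_cases hb : ω ∈ bad
    · exact Or.inr hb
    · left
      rw [hbaddef, Set.mem_iUnion] at hb
      push_neg at hb
      have hentry : ∀ j k : Fin L, |Scov ω j k - Sstar j k| ≤ t := by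
        intro j k
        have h1 := hb (j, k, true)
        have h2 := hb (j, k, false)
        simp only [hAdef, Set.mem_setOf_eq, not_le] at h1 h2
        norm_num at h1 h2
        rw [abs_le]
        constructor <;> linarith
      have hnorm : ‖Scov ω - Sstar‖ ≤ (L:ℝ) * t := by
        apply aux_opnorm_le _ ht0.le
        intro j k
        rw [Matrix.sub_apply]
        exact hentry j k
      have hLt : (L:ℝ) * t = η := by
        rw [htdef]
        field_simp
      rw [Set.mem_setOf_eq]
      rw [hLt] at hnorm
      exact hnorm
  have h1le : (1:ℝ≥0∞) ≤ P {ω | ‖Scov ω - Sstar‖ ≤ η} + ENNReal.ofReal α := by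
    calc (1:ℝ≥0∞) = P Set.univ := (measure_univ).symm
      _ ≤ P ({ω | ‖Scov ω - Sstar‖ ≤ η} ∪ bad) := measure_mono hsub
      _ ≤ P {ω | ‖Scov ω - Sstar‖ ≤ η} + P bad := measure_union_le _ _
      _ ≤ P {ω | ‖Scov ω - Sstar‖ ≤ η} + ENNReal.ofReal α := by
          exact add_le_add_right hbadle _
  calc ENNReal.ofReal (1 - α) = 1 - ENNReal.ofReal α := by
        rw [ENNReal.ofReal_sub _ hα0.le, ENNReal.ofReal_one]
    _ ≤ P {ω | ‖Scov ω - Sstar‖ ≤ η} := tsub_le_iff_right.2 h1le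
end
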